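/- Let R be a ring and let (Δ₁, w₁), (Δ₂, w₂) be balanced weighted complexes of degrees d₁ and d₂ on {1,…,n}. Define the product complex Δ = Δ₁·Δ₂ = {σ₁ ⊎ σ₂ : σ₁ ∈ Δ₁, σ₂ ∈ Δ₂}, weighted by w(σ) = ∑_{(σ₁,σ₂) ∈ Δ₁×Δ₂, σ₁⊎σ₂ = σ} w₁(σ₁)·w₂(σ₂). Then (Δ, w) is a balanced (d₁+d₂+1)-complex. -/

import Mathlib

open scoped BigOperators

/-- The multiplicity `m(T ⊆ σ) = ∏ i, C(σ i, T i)` of a multiset `T` in a multiset `σ`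
on `{1, …, n}` (multisets encoded as functions `Fin n → ℕ`). -/
def mult {n : ℕ} (T σ : Fin n → ℕ) : ℕ := ∏ i, (σ i).choose (T i)

lemma mult_add {n : ℕ} (S σ₁ σ₂ : Fin n → ℕ) :
    mult S (σ₁ + σ₂) =
      ∑ g ∈ Fintype.piFinset (fun i => Finset.HasAntidiagonal.antidiagonal (S i)),
        mult (fun i => (g i).1) σ₁ * mult (fun i => (g i).2) σ₂ := by
  simp only [mult, Pi.add_apply]
  calc ∏ i, (σ₁ i + σ₂ i).choose (S i)
      = ∏ i, ∑ p ∈ Finset.HasAntidiagonal.antidiagonal (S i), (σ₁ i).choose p.1 * (σ₂ i).choose p.2 := by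
        simp_rw [Nat.add_choose_eq]
    _ = ∑ g ∈ Fintype.piFinset (fun i => Finset.HasAntidiagonal.antidiagonal (S i)),
          ∏ i, (σ₁ i).choose (g i).1 * (σ₂ i).choose (g i).2 :=
        Finset.prod_univ_sum _ _
    _ = _ := by
        refine Finset.sum_congr rfl fun g _ => ?_
        rw [Finset.prod_mul_distrib]

/-- Let `(Δ₁, w₁)` and `(Δ₂, w₂)` be balanced weighted complexes of degrees `d₁`, `d₂`
over a commutative ring `R`. Then the product complex
`Δ = {σ₁ ⊎ σ₂ : σ₁ ∈ Δ₁, σ₂ ∈ Δ₂}` with the induced weighting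
`w(σ) = ∑_{σ₁ ⊎ σ₂ = σ} w₁(σ₁)·w₂(σ₂)` is a balanced `(d₁+d₂+1)`-complex. -/
theorem product_balanced (R : Type*) [CommRing R] {n d₁ d₂ : ℕ}
    (Δ₁ Δ₂ : Finset (Fin n → ℕ)) (w₁ w₂ : (Fin n → ℕ) → R)
    (hc₁ : ∀ σ ∈ Δ₁, ∑ i, σ i = d₁ + 1) (hc₂ : ∀ σ ∈ Δ₂, ∑ i, σ i = d₂ + 1)
    (hb₁ : ∀ S : Fin n → ℕ, ∑ i, S i ≤ d₁ → ∑ σ ∈ Δ₁, w₁ σ * (mult S σ : R) = 0)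
    (hb₂ : ∀ S : Fin n → ℕ, ∑ i, S i ≤ d₂ → ∑ σ ∈ Δ₂, w₂ σ * (mult S σ : R) = 0) :
    ∀ S : Fin n → ℕ, ∑ i, S i ≤ d₁ + d₂ + 1 →
      ∑ σ ∈ (Δ₁ ×ˢ Δ₂).image (fun p => p.1 + p.2),
        (∑ p ∈ (Δ₁ ×ˢ Δ₂).filter (fun p => p.1 + p.2 = σ), w₁ p.1 * w₂ p.2)
          * (mult S σ : R) = 0 := by
  intro S hS
  have step1 :
      ∑ σ ∈ (Δ₁ ×ˢ Δ₂).image (fun p => p.1 + p.2),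
        (∑ p ∈ (Δ₁ ×ˢ Δ₂).filter (fun p => p.1 + p.2 = σ), w₁ p.1 * w₂ p.2)
          * (mult S σ : R)
      = ∑ p ∈ Δ₁ ×ˢ Δ₂, w₁ p.1 * w₂ p.2 * (mult S (p.1 + p.2) : R) := by
    rw [← Finset.sum_fiberwise_of_maps_to (g := fun p : (Fin n → ℕ) × (Fin n → ℕ) => p.1 + p.2)
      (fun p hp => Finset.mem_image_of_mem _ hp)]
    refine Finset.sum_congr rfl fun σ _ => ?_
    rw [Finset.sum_mul]
    refine Finset.sum_congr rfl fun p hp => ?_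
    rw [(Finset.mem_filter.mp hp).2]
  rw [step1]
  have step2 :
      ∑ p ∈ Δ₁ ×ˢ Δ₂, w₁ p.1 * w₂ p.2 * (mult S (p.1 + p.2) : R)
      = ∑ g ∈ Fintype.piFinset (fun i => Finset.HasAntidiagonal.antidiagonal (S i)),
          (∑ σ ∈ Δ₁, w₁ σ * (mult (fun i => (g i).1) σ : R)) *
          (∑ σ ∈ Δ₂, w₂ σ * (mult (fun i => (g i).2) σ : R)) := by
    calc ∑ p ∈ Δ₁ ×ˢ Δ₂, w₁ p.1 * w₂ p.2 * (mult S (p.1 + p.2) : R)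
        = ∑ p ∈ Δ₁ ×ˢ Δ₂, ∑ g ∈ Fintype.piFinset (fun i => Finset.HasAntidiagonal.antidiagonal (S i)),
            (w₁ p.1 * (mult (fun i => (g i).1) p.1 : R)) *
            (w₂ p.2 * (mult (fun i => (g i).2) p.2 : R)) := by
          refine Finset.sum_congr rfl fun p _ => ?_
          rw [mult_add, Nat.cast_sum, Finset.mul_sum]
          refine Finset.sum_congr rfl fun g _ => ?_
          push_cast
          ring
      _ = ∑ g ∈ Fintype.piFinset (fun i => Finset.HasAntidiagonal.antidiagonal (S i)),
            ∑ p ∈ Δ₁ ×ˢ Δ₂,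
            (w₁ p.1 * (mult (fun i => (g i).1) p.1 : R)) *
            (w₂ p.2 * (mult (fun i => (g i).2) p.2 : R)) := Finset.sum_comm
      _ = _ := by
          refine Finset.sum_congr rfl fun g _ => ?_
          rw [Finset.sum_mul_sum, Finset.sum_product]
  rw [step2]
  refine Finset.sum_eq_zero fun g hg => ?_
  have hsum : ∑ i, (g i).1 + ∑ i, (g i).2 = ∑ i, S i := by
    rw [← Finset.sum_add_distrib]
    refine Finset.sum_congr rfl fun i _ => ?_
    have := Fintype.mem_piFinset.mp hg i
    exact Finset.HasAntidiagonal.mem_antidiagonal.mp this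
  rcases le_or_gt (∑ i, (g i).1) d₁ with h1 | h1
  · rw [hb₁ _ h1, zero_mul]
  · have h2 : ∑ i, (g i).2 ≤ d₂ := by omega
    rw [hb₂ _ h2, mul_zero]
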